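/- Let p and q be distinct odd positive integers with gcd(p,q) = 1, both dividing t. If α : ℤ/2t → {±1} satisfies both α(p + i) = -α(i) and α(q + i) = -α(i) for all i, then α(i + 1) = -α(i) for all i, i.e., α is strictly alternating. -/

import Mathlib

/-- If `p` and `q` are distinct coprime odd positive divisors of `t`
and `α : ℤ/2t → {±1}` satisfies both `α(p + i) = -α(i)` and `α(q + i) = -α(i)`,
then `α(i + 1) = -α(i)` for all `i`, i.e. `α` is strictly alternating. -/
theorem stmt3 (t p q : ℕ) (ht : 1 ≤ t) (hp : Odd p) (hq : Odd q)
    (hppos : 0 < p) (hqpos : 0 < q) (hpq : p ≠ q) (hcop : Nat.gcd p q = 1)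
    (hpd : p ∣ t) (hqd : q ∣ t)
    (α : ZMod (2 * t) → ℤ) (hval : ∀ i, α i = 1 ∨ α i = -1)
    (ha₁ : ∀ i, α ((p : ZMod (2 * t)) + i) = -α i)
    (ha₂ : ∀ i, α ((q : ZMod (2 * t)) + i) = -α i) :
    ∀ i : ZMod (2 * t), α (i + 1) = -α i := by
  have key : ∀ (r : ℕ), (∀ j, α ((r : ZMod (2*t)) + j) = - α j) →
      ∀ (n : ℕ) (j : ZMod (2*t)), α (((n * r : ℕ) : ZMod (2*t)) + j) = (-1)^n * α j := by
    intro r hr n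
    induction n with
    | zero => intro j; simp
    | succ n ih =>
      intro j
      have h1 : ((n+1) * r : ℕ) = r + n * r := by ring
      rw [h1]
      push_cast
      rw [add_assoc, hr]
      have := ih j
      push_cast at this
      rw [this]
      ring
  intro i
  rcases eq_or_lt_of_le (show 1 ≤ q from hqpos) with hq1 | hq1
  · -- q = 1
    have := ha₂ i
    rw [← hq1] at this
    push_cast at this
    rw [add_comm] at this
    exact this
  · haveI : NeZero q := ⟨by omega⟩
    -- find a b : ℕ with a * p = b * q + 1
    set u : (ZMod q)ˣ := ZMod.unitOfCoprime p hcop with hu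
    set a : ℕ := ((u⁻¹ : (ZMod q)ˣ) : ZMod q).val with ha
    have hap : ((a * p : ℕ) : ZMod q) = 1 := by
      push_cast
      rw [ha, ZMod.natCast_val, ZMod.cast_id]
      have hpu : ((p : ZMod q)) = (u : ZMod q) := rfl
      rw [hpu]
      first
      | rfl
      | exact_mod_cast u.inv_mul
    have hmod : (a * p) % q = 1 % q :=
      (ZMod.natCast_eq_natCast_iff _ _ _).mp (by rw [hap]; simp)
    have h1q : 1 % q = 1 := Nat.mod_eq_of_lt hq1
    have hge : 1 ≤ a * p := by
      rcases Nat.eq_zero_or_pos (a * p) with h | h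
      · rw [h, Nat.zero_mod, h1q] at hmod; omega
      · exact h
    obtain ⟨b, hb⟩ : ∃ b, a * p = b * q + 1 := by
      refine ⟨a * p / q, ?_⟩
      have h := Nat.div_add_mod (a * p) q
      rw [Nat.mul_comm] at h
      omega
    -- parity: a + b is odd
    have hpar : Odd (a + b) := by
      obtain ⟨k, hk⟩ := hp
      obtain ⟨l, hl⟩ := hq
      have h2 : a * (2*k+1) = b * (2*l+1) + 1 := by rw [← hk, ← hl]; exact hb
      have h3 : 2*(a*k) + a = 2*(b*l) + b + 1 := by
        zify at h2 ⊢; linear_combination h2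
      rw [Nat.odd_iff]
      omega
    -- combine
    have h1 : α (((a * p : ℕ) : ZMod (2*t)) + i) = (-1)^a * α i := key p ha₁ a i
    have h2 : α (((b * q : ℕ) : ZMod (2*t)) + (1 + i)) = (-1)^b * α (1 + i) :=
      key q ha₂ b (1 + i)
    have hce : ((a * p : ℕ) : ZMod (2*t)) + i = ((b * q : ℕ) : ZMod (2*t)) + (1 + i) := by
      rw [hb]; push_cast; ring
    rw [hce, h2] at h1
    have hsq : (-1:ℤ)^b * (-1)^b = 1 := by
      rw [← pow_add]; exact Even.neg_one_pow (by exact ⟨b, rfl⟩)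
    have hmul : (-1:ℤ)^b * (-1)^a = -1 := by
      rw [← pow_add, add_comm]
      exact Odd.neg_one_pow hpar
    have : (-1:ℤ)^b * ((-1)^b * α (1+i)) = (-1)^b * ((-1)^a * α i) := by rw [h1]
    rw [← mul_assoc, hsq, one_mul, ← mul_assoc, hmul] at this
    rw [add_comm] at this
    linarith [this]
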